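/- Let m ≥ 1 be an integer and b₁, b₂ real numbers. For every probability measure ξ on [0, 2π], the infimum over all trigonometric polynomials q of degree at most m−1 of ∫₀^{2π} ( q(x) + b₁ sin(mx) + b₂ cos(mx) )² dξ(x) is at most b₁² + b₂². Consequently, the supremum over all probability measures ξ of this infimum equals b₁² + b₂². -/

import Mathlib

open Real MeasureTheory

/-- A trigonometric polynomial of degree at most `n`. -/
def IsTrigPoly (n : ℕ) (q : ℝ → ℝ) : Prop :=
  ∃ (c : ℝ) (α β : ℕ → ℝ), ∀ x, q x =
    c + ∑ j ∈ Finset.Icc 1 n, (α j * Real.cos (j * x) + β j * Real.sin (j * x))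

open Finset
open scoped ENNReal


lemma exp_alt_sum (m : ℕ) (hm : 1 ≤ m) (j : ℕ) (hj : j < m) (θ : ℝ) :
    ∑ i ∈ Finset.range (2*m), (-1:ℂ)^i * Complex.exp ((j*(θ + i*π/m) : ℝ) * Complex.I) = 0 := by
  have hm0 : (m:ℂ) ≠ 0 := Nat.cast_ne_zero.2 (by omega)
  have hmr : (m:ℝ) ≠ 0 := Nat.cast_ne_zero.2 (by omega)
  set w : ℂ := -Complex.exp ((j*π/m : ℝ) * Complex.I) with hw
  have hterm : ∀ i ∈ Finset.range (2*m), (-1:ℂ)^i * Complex.exp ((j*(θ + i*π/m) : ℝ) * Complex.I)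
      = Complex.exp ((j*θ : ℝ)*Complex.I) * w^i := by
    intro i _
    rw [hw, neg_pow (Complex.exp _) i, ← Complex.exp_nat_mul]
    have he : Complex.exp ((j*(θ + i*π/m) : ℝ) * Complex.I)
        = Complex.exp ((j*θ : ℝ)*Complex.I) * Complex.exp ((i:ℂ) * (((j*π/m : ℝ):ℂ) * Complex.I)) := by
      rw [← Complex.exp_add]
      congr 1
      push_cast
      field_simp
    rw [he]
    ring
  rw [Finset.sum_congr rfl hterm, ← Finset.mul_sum]
  have hw1 : w ≠ 1 := by
    intro h
    have h2 : Complex.exp ((j*π/m : ℝ) * Complex.I) = -1 := by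
      rw [hw] at h; linear_combination -h
    have h3 : Real.cos (j*π/m) = -1 := by
      have := congrArg Complex.re h2
      rwa [Complex.exp_ofReal_mul_I_re] at this
    have h4 : Real.cos π < Real.cos (j*π/m) := by
      apply Real.cos_lt_cos_of_nonneg_of_le_pi
      · positivity
      · exact le_refl π
      · rw [div_lt_iff₀ (by positivity)]
        have : (j:ℝ) < m := Nat.cast_lt.2 hj
        nlinarith [Real.pi_pos]
    rw [Real.cos_pi, h3] at h4
    exact lt_irrefl _ h4
  have hpow : w ^ (2*m) = 1 := by
    rw [hw, neg_pow (Complex.exp _), ← Complex.exp_nat_mul]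
    have : ((2*m : ℕ) : ℂ) * (((j*π/m : ℝ) : ℂ) * Complex.I) = (j:ℤ) * (2 * (π:ℂ) * Complex.I) := by
      push_cast
      field_simp
    rw [this, Complex.exp_int_mul_two_pi_mul_I, Even.neg_one_pow ⟨m, by ring⟩, one_mul]
  rw [geom_sum_eq hw1, hpow]
  simp

lemma alt_cos (m : ℕ) (hm : 1 ≤ m) (j : ℕ) (hj : j < m) (θ : ℝ) :
    ∑ i ∈ Finset.range (2*m), (-1:ℝ)^i * Real.cos (j*(θ + i*π/m)) = 0 := by
  have h := congrArg Complex.re (exp_alt_sum m hm j hj θ)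
  rw [Complex.re_sum] at h
  have e : ∀ i ∈ Finset.range (2*m), ((-1:ℂ)^i * Complex.exp ((j*(θ + i*π/m) : ℝ) * Complex.I)).re
      = (-1:ℝ)^i * Real.cos (j*(θ+i*π/m)) := by
    intro i _
    rw [show ((-1:ℂ))^i = (((-1:ℝ)^i : ℝ) : ℂ) by push_cast; ring, Complex.re_ofReal_mul,
      Complex.exp_ofReal_mul_I_re]
  rw [Finset.sum_congr rfl e] at h
  simpa using h

lemma alt_sin (m : ℕ) (hm : 1 ≤ m) (j : ℕ) (hj : j < m) (θ : ℝ) :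
    ∑ i ∈ Finset.range (2*m), (-1:ℝ)^i * Real.sin (j*(θ + i*π/m)) = 0 := by
  have h := congrArg Complex.im (exp_alt_sum m hm j hj θ)
  rw [Complex.im_sum] at h
  have e : ∀ i ∈ Finset.range (2*m), ((-1:ℂ)^i * Complex.exp ((j*(θ + i*π/m) : ℝ) * Complex.I)).im
      = (-1:ℝ)^i * Real.sin (j*(θ+i*π/m)) := by
    intro i _
    rw [show ((-1:ℂ))^i = (((-1:ℝ)^i : ℝ) : ℂ) by push_cast; ring, Complex.im_ofReal_mul,
      Complex.exp_ofReal_mul_I_im]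
  rw [Finset.sum_congr rfl e] at h
  simpa using h

lemma alt_neg_one (m : ℕ) : ∑ i ∈ Finset.range (2*m), (-1:ℝ)^i = 0 := by
  rw [geom_sum_eq (by norm_num : (-1:ℝ) ≠ 1)]
  simp [pow_mul]

lemma alt_sum_trig (m : ℕ) (hm : 1 ≤ m) (θ : ℝ) (q : ℝ → ℝ) (hq : IsTrigPoly (m-1) q) :
    ∑ i ∈ Finset.range (2*m), (-1:ℝ)^i * q (θ + i*π/m) = 0 := by
  obtain ⟨c, α, β, h⟩ := hq
  have hsplit : ∀ i ∈ Finset.range (2*m), (-1:ℝ)^i * q (θ + i*π/m)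
      = (-1:ℝ)^i * c + ∑ j ∈ Finset.Icc 1 (m-1),
        ((-1:ℝ)^i * (α j * Real.cos (j*(θ+i*π/m))) + (-1:ℝ)^i * (β j * Real.sin (j*(θ+i*π/m)))) := by
    intro i _
    rw [h, mul_add, Finset.mul_sum]
    congr 1
    exact Finset.sum_congr rfl fun j _ => by ring
  rw [Finset.sum_congr rfl hsplit, Finset.sum_add_distrib]
  have h1 : ∑ i ∈ Finset.range (2*m), (-1:ℝ)^i * c = 0 := by
    rw [← Finset.sum_mul, alt_neg_one, zero_mul]
  rw [h1, zero_add, Finset.sum_comm]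
  apply Finset.sum_eq_zero
  intro j hjmem
  have hj : j < m := by
    have := (Finset.mem_Icc.1 hjmem).2
    omega
  rw [Finset.sum_add_distrib]
  have h2 : ∑ i ∈ Finset.range (2*m), (-1:ℝ)^i * (α j * Real.cos (j*(θ + i*π/m)))
      = α j * ∑ i ∈ Finset.range (2*m), (-1:ℝ)^i * Real.cos (j*(θ + i*π/m)) := by
    rw [Finset.mul_sum]; apply Finset.sum_congr rfl; intro i _; ring
  have h3 : ∑ i ∈ Finset.range (2*m), (-1:ℝ)^i * (β j * Real.sin (j*(θ + i*π/m)))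
      = β j * ∑ i ∈ Finset.range (2*m), (-1:ℝ)^i * Real.sin (j*(θ + i*π/m)) := by
    rw [Finset.mul_sum]; apply Finset.sum_congr rfl; intro i _; ring
  rw [h2, h3, alt_cos m hm j hj θ, alt_sin m hm j hj θ, mul_zero, mul_zero, add_zero]

lemma trig_periodic (n : ℕ) (q : ℝ → ℝ) (hq : IsTrigPoly n q) (x : ℝ) (k : ℤ) :
    q (x - 2*π*k) = q x := by
  obtain ⟨c, α, β, h⟩ := hq
  rw [h, h]
  congr 1
  apply Finset.sum_congr rfl
  intro j _
  have hc : (j:ℝ)*(x - 2*π*k) = j*x + ((-(j*k) : ℤ) : ℝ)*(2*π) := by push_cast; ring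
  rw [hc, Real.cos_add_int_mul_two_pi, Real.sin_add_int_mul_two_pi]

lemma integrable_dirac'' (f : ℝ → ℝ) (a : ℝ) : Integrable f (Measure.dirac a) := by
  refine (integrable_const (f a)).congr ?_
  rw [Filter.EventuallyEq, ae_dirac_eq]
  exact Filter.eventually_pure.2 rfl

lemma integral_unif (n : ℕ) (hn : n ≠ 0) (y : ℕ → ℝ) (f : ℝ → ℝ) :
    ∫ x, f x ∂(((n:ℕ):ℝ≥0∞)⁻¹ • ∑ i ∈ Finset.range n, Measure.dirac (y i))
      = (n:ℝ)⁻¹ * ∑ i ∈ Finset.range n, f (y i) := by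
  rw [integral_smul_measure, integral_finset_sum_measure (fun i _ => integrable_dirac'' f (y i))]
  simp only [integral_dirac]
  rw [ENNReal.toReal_inv, ENNReal.toReal_natCast, smul_eq_mul]

lemma unif_prob (n : ℕ) (hn : n ≠ 0) (y : ℕ → ℝ) :
    IsProbabilityMeasure (((n:ℕ):ℝ≥0∞)⁻¹ • ∑ i ∈ Finset.range n, Measure.dirac (y i)) := by
  constructor
  rw [Measure.smul_apply, Measure.finset_sum_apply]
  simp only [Measure.dirac_apply_of_mem (Set.mem_univ _), Finset.sum_const, Finset.card_range,
    nsmul_eq_mul, mul_one, smul_eq_mul]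
  exact ENNReal.inv_mul_cancel (by exact_mod_cast hn) (ENNReal.natCast_ne_top n)

lemma unif_support (n : ℕ) (y : ℕ → ℝ) (hy : ∀ i ∈ Finset.range n, y i ∈ Set.Icc 0 (2*π)) :
    (((n:ℕ):ℝ≥0∞)⁻¹ • ∑ i ∈ Finset.range n, Measure.dirac (y i)) (Set.Icc 0 (2*π))ᶜ = 0 := by
  rw [Measure.smul_apply, Measure.finset_sum_apply]
  have : ∀ i ∈ Finset.range n, Measure.dirac (y i) (Set.Icc 0 (2*π))ᶜ = 0 := by
    intro i hi
    rw [Measure.dirac_apply' _ (measurableSet_Icc.compl)]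
    simp [Set.indicator_of_notMem, hy i hi]
  rw [Finset.sum_congr rfl this]
  simp

section Design
variable (m : ℕ) (b₁ b₂ : ℝ)

noncomputable def desR : ℝ := ‖(b₁ + b₂ * Complex.I : ℂ)‖
noncomputable def desX (i : ℕ) : ℝ := (π/2 - (b₁ + b₂*Complex.I : ℂ).arg)/m + i*π/m
noncomputable def desY (i : ℕ) : ℝ := desX m b₁ b₂ i - 2*π*⌊desX m b₁ b₂ i / (2*π)⌋

lemma desR_sq : desR b₁ b₂ ^ 2 = b₁^2 + b₂^2 := by
  rw [desR, Complex.sq_norm, Complex.normSq_apply]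
  simp [pow_two]

lemma desR_nonneg : 0 ≤ desR b₁ b₂ := norm_nonneg _

lemma des_val : b₁ * Real.cos (b₁ + b₂*Complex.I : ℂ).arg
    + b₂ * Real.sin (b₁ + b₂*Complex.I : ℂ).arg = desR b₁ b₂ := by
  set z : ℂ := b₁ + b₂*Complex.I with hz
  have hre : z.re = b₁ := by simp [hz]
  have him : z.im = b₂ := by simp [hz]
  rcases eq_or_ne z 0 with h | h
  · have h1 : b₁ = 0 := by rw [← hre, h]; simp
    have h2 : b₂ = 0 := by rw [← him, h]; simp
    simp [desR, ← hz, h, h1, h2]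
  · have habs : 0 < ‖z‖ := norm_pos_iff.mpr h
    rw [Complex.cos_arg h, Complex.sin_arg, hre, him, desR, ← hz]
    field_simp
    have hns := Complex.sq_norm z
    rw [Complex.normSq_apply, hre, him] at hns
    nlinarith [hns]

lemma desY_val (hm : 1 ≤ m) (i : ℕ) :
    b₁ * Real.sin (m * desY m b₁ b₂ i) + b₂ * Real.cos (m * desY m b₁ b₂ i)
      = (-1)^i * desR b₁ b₂ := by
  have hmr : (m:ℝ) ≠ 0 := Nat.cast_ne_zero.2 (by omega)
  set φ := (b₁ + b₂*Complex.I : ℂ).arg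
  set k : ℤ := ⌊desX m b₁ b₂ i / (2*π)⌋
  have h1 : (m:ℝ) * desY m b₁ b₂ i = (m:ℝ) * desX m b₁ b₂ i + ((-(m*k) : ℤ) : ℝ) * (2*π) := by
    rw [desY]; push_cast; ring
  have h2 : (m:ℝ) * desX m b₁ b₂ i = (π/2 - φ) + i * π := by
    rw [desX]; field_simp; ring
  rw [h1, Real.sin_add_int_mul_two_pi, Real.cos_add_int_mul_two_pi, h2,
    Real.sin_add_nat_mul_pi, Real.cos_add_nat_mul_pi,
    Real.sin_pi_div_two_sub, Real.cos_pi_div_two_sub]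
  rw [← des_val b₁ b₂]
  ring

lemma desY_mem (i : ℕ) : desY m b₁ b₂ i ∈ Set.Icc 0 (2*π) := by
  have h2π : (0:ℝ) < 2*π := by positivity
  have h : desY m b₁ b₂ i = 2*π * Int.fract (desX m b₁ b₂ i / (2*π)) := by
    rw [desY, Int.fract]
    field_simp
  constructor
  · rw [h]; exact mul_nonneg h2π.le (Int.fract_nonneg _)
  · rw [h]
    nlinarith [Int.fract_lt_one (desX m b₁ b₂ i / (2*π)), Int.fract_nonneg (desX m b₁ b₂ i / (2*π))]

lemma desY_trig (hm : 1 ≤ m) (q : ℝ → ℝ) (hq : IsTrigPoly (m-1) q) (i : ℕ) :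
    q (desY m b₁ b₂ i) = q (desX m b₁ b₂ i) := by
  rw [desY]
  exact trig_periodic (m-1) q hq _ _

lemma des_key (hm : 1 ≤ m) (q : ℝ → ℝ) (hq : IsTrigPoly (m-1) q) :
    b₁^2 + b₂^2 ≤ ((2*m : ℕ):ℝ)⁻¹ * ∑ i ∈ Finset.range (2*m),
      (q (desY m b₁ b₂ i) + b₁ * Real.sin (m * desY m b₁ b₂ i)
        + b₂ * Real.cos (m * desY m b₁ b₂ i))^2 := by
  set R := desR b₁ b₂ with hR
  set a : ℕ → ℝ := fun i => q (desX m b₁ b₂ i) + (-1)^i * R with ha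
  have hsummand : ∀ i ∈ Finset.range (2*m),
      (q (desY m b₁ b₂ i) + b₁ * Real.sin (m * desY m b₁ b₂ i)
        + b₂ * Real.cos (m * desY m b₁ b₂ i))^2 = a i ^ 2 := by
    intro i _
    rw [add_assoc, desY_val m b₁ b₂ hm i, desY_trig m b₁ b₂ hm q hq i]
  rw [Finset.sum_congr rfl hsummand]
  have halt : ∑ i ∈ Finset.range (2*m), (-1:ℝ)^i * a i = 2*m*R := by
    have : ∀ i ∈ Finset.range (2*m), (-1:ℝ)^i * a i
        = (-1:ℝ)^i * q ((π/2 - (b₁ + b₂*Complex.I : ℂ).arg)/m + i*π/m) + R := by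
      intro i _
      rw [ha]
      simp only [desX]
      rw [mul_add, ← mul_assoc, ← pow_add]
      have he : (-1:ℝ)^(i+i) = 1 := Even.neg_one_pow ⟨i, rfl⟩
      rw [he, one_mul]
    rw [Finset.sum_congr rfl this, Finset.sum_add_distrib,
      alt_sum_trig m hm _ q hq, zero_add, Finset.sum_const, Finset.card_range]
    push_cast; ring
  have hcs := sq_sum_le_card_mul_sum_sq (s := Finset.range (2*m))
    (f := fun i => (-1:ℝ)^i * a i)
  rw [halt, Finset.card_range] at hcs
  have hsq : ∀ i ∈ Finset.range (2*m), ((-1:ℝ)^i * a i)^2 = a i ^2 := by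
    intro i _
    have h1 : ((-1:ℝ)^i)^2 = 1 := by
      rcases neg_one_pow_eq_or ℝ i with h | h <;> rw [h] <;> norm_num
    rw [mul_pow, h1, one_mul]
  rw [Finset.sum_congr rfl hsq] at hcs
  have hm2 : (0:ℝ) < 2*m := by positivity
  have hcast : ((2*m : ℕ):ℝ) = 2*(m:ℝ) := by push_cast; ring
  push_cast at hcs ⊢
  rw [← desR_sq b₁ b₂, ← hR, inv_mul_eq_div, le_div_iff₀ hm2]
  nlinarith [hcs]

end Design

lemma part1 (m : ℕ) (hm : 1 ≤ m) (b₁ b₂ : ℝ) (ξ : Measure ℝ) (hξ : IsProbabilityMeasure ξ) :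
    sInf {v : ℝ | ∃ q : ℝ → ℝ, IsTrigPoly (m - 1) q ∧
        v = ∫ x, (q x + b₁ * Real.sin (m * x) + b₂ * Real.cos (m * x)) ^ 2 ∂ξ}
      ≤ b₁ ^ 2 + b₂ ^ 2 := by
  have hq0 : IsTrigPoly (m-1) (fun _ : ℝ => (0:ℝ)) := ⟨0, fun _ => 0, fun _ => 0, by simp⟩
  have hmem : (∫ x, ((fun _ : ℝ => (0:ℝ)) x + b₁ * Real.sin (m*x) + b₂ * Real.cos (m*x))^2 ∂ξ)
      ∈ {v : ℝ | ∃ q : ℝ → ℝ, IsTrigPoly (m - 1) q ∧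
        v = ∫ x, (q x + b₁ * Real.sin (m * x) + b₂ * Real.cos (m * x)) ^ 2 ∂ξ} :=
    ⟨_, hq0, rfl⟩
  have hbdd : BddBelow {v : ℝ | ∃ q : ℝ → ℝ, IsTrigPoly (m - 1) q ∧
      v = ∫ x, (q x + b₁ * Real.sin (m * x) + b₂ * Real.cos (m * x)) ^ 2 ∂ξ} := by
    refine ⟨0, fun v hv => ?_⟩
    obtain ⟨q, -, rfl⟩ := hv
    exact integral_nonneg fun x => sq_nonneg _
  refine (csInf_le hbdd hmem).trans ?_
  have hpt : ∀ x, ((fun _ : ℝ => (0:ℝ)) x + b₁ * Real.sin (m*x) + b₂ * Real.cos (m*x))^2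
      ≤ b₁^2 + b₂^2 := fun x => by
    simp only
    nlinarith [Real.sin_sq_add_cos_sq ((m:ℝ)*x),
      sq_nonneg (b₁ * Real.cos ((m:ℝ)*x) - b₂ * Real.sin ((m:ℝ)*x))]
  have hcont : Continuous fun x : ℝ =>
      ((fun _ : ℝ => (0:ℝ)) x + b₁ * Real.sin (m*x) + b₂ * Real.cos (m*x))^2 := by fun_prop
  have hint : Integrable (fun x => ((fun _ : ℝ => (0:ℝ)) x + b₁ * Real.sin (m*x)
      + b₂ * Real.cos (m*x))^2) ξ := by
    refine (integrable_const (b₁^2+b₂^2)).mono' hcont.aestronglyMeasurable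
      (ae_of_all _ fun x => ?_)
    rw [Real.norm_eq_abs, abs_of_nonneg (sq_nonneg _)]
    exact hpt x
  calc ∫ x, ((fun _ : ℝ => (0:ℝ)) x + b₁ * Real.sin (m*x) + b₂ * Real.cos (m*x))^2 ∂ξ
      ≤ ∫ _x, (b₁^2 + b₂^2) ∂ξ := integral_mono hint (integrable_const _) hpt
    _ = b₁^2 + b₂^2 := by simp [measure_univ]

theorem T_optimal_value (m : ℕ) (hm : 1 ≤ m) (b₁ b₂ : ℝ) :
    (∀ ξ : Measure ℝ, IsProbabilityMeasure ξ → ξ (Set.Icc 0 (2 * Real.pi))ᶜ = 0 →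
      sInf {v : ℝ | ∃ q : ℝ → ℝ, IsTrigPoly (m - 1) q ∧
          v = ∫ x, (q x + b₁ * Real.sin (m * x) + b₂ * Real.cos (m * x)) ^ 2 ∂ξ}
        ≤ b₁ ^ 2 + b₂ ^ 2) ∧
    sSup {w : ℝ | ∃ ξ : Measure ℝ, IsProbabilityMeasure ξ ∧ ξ (Set.Icc 0 (2 * Real.pi))ᶜ = 0 ∧
        w = sInf {v : ℝ | ∃ q : ℝ → ℝ, IsTrigPoly (m - 1) q ∧
          v = ∫ x, (q x + b₁ * Real.sin (m * x) + b₂ * Real.cos (m * x)) ^ 2 ∂ξ}}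
      = b₁ ^ 2 + b₂ ^ 2 := by
  refine ⟨fun ξ hξ _ => part1 m hm b₁ b₂ ξ hξ, ?_⟩
  have hn : 2*m ≠ 0 := by omega
  have hnr : ((2*m : ℕ):ℝ) ≠ 0 := Nat.cast_ne_zero.2 hn
  set ξ₀ : Measure ℝ := ((2*m:ℕ):ℝ≥0∞)⁻¹ • ∑ i ∈ Finset.range (2*m),
    Measure.dirac (desY m b₁ b₂ i) with hξ₀
  have hprob : IsProbabilityMeasure ξ₀ := unif_prob (2*m) hn _
  have hsupp : ξ₀ (Set.Icc 0 (2*π))ᶜ = 0 := unif_support (2*m) _ fun i _ => desY_mem m b₁ b₂ i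
  have hq0 : IsTrigPoly (m-1) (fun _ : ℝ => (0:ℝ)) := ⟨0, fun _ => 0, fun _ => 0, by simp⟩
  -- the q = 0 value for ξ₀ equals b₁² + b₂²
  have hv0 : (∫ x, ((fun _ : ℝ => (0:ℝ)) x + b₁ * Real.sin (m*x) + b₂ * Real.cos (m*x))^2 ∂ξ₀)
      = b₁^2 + b₂^2 := by
    rw [hξ₀, integral_unif (2*m) hn]
    have hval : ∀ i ∈ Finset.range (2*m),
        ((fun _ : ℝ => (0:ℝ)) (desY m b₁ b₂ i) + b₁ * Real.sin (m * desY m b₁ b₂ i)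
          + b₂ * Real.cos (m * desY m b₁ b₂ i))^2 = b₁^2 + b₂^2 := by
      intro i _
      simp only
      rw [zero_add, desY_val m b₁ b₂ hm i, mul_pow]
      have h1 : ((-1:ℝ)^i)^2 = 1 := by
        rcases neg_one_pow_eq_or ℝ i with h | h <;> rw [h] <;> norm_num
      rw [h1, one_mul, desR_sq]
    rw [Finset.sum_congr rfl hval, Finset.sum_const, Finset.card_range, nsmul_eq_mul]
    field_simp
  have hSinf : sInf {v : ℝ | ∃ q : ℝ → ℝ, IsTrigPoly (m - 1) q ∧
      v = ∫ x, (q x + b₁ * Real.sin (m * x) + b₂ * Real.cos (m * x)) ^ 2 ∂ξ₀}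
      = b₁^2 + b₂^2 := by
    have hmem : b₁^2 + b₂^2 ∈ {v : ℝ | ∃ q : ℝ → ℝ, IsTrigPoly (m - 1) q ∧
        v = ∫ x, (q x + b₁ * Real.sin (m * x) + b₂ * Real.cos (m * x)) ^ 2 ∂ξ₀} :=
      ⟨fun _ => 0, hq0, hv0.symm⟩
    have hlb : ∀ v ∈ {v : ℝ | ∃ q : ℝ → ℝ, IsTrigPoly (m - 1) q ∧
        v = ∫ x, (q x + b₁ * Real.sin (m * x) + b₂ * Real.cos (m * x)) ^ 2 ∂ξ₀},
        b₁^2 + b₂^2 ≤ v := by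
      rintro v ⟨q, hq, rfl⟩
      rw [hξ₀, integral_unif (2*m) hn]
      exact des_key m b₁ b₂ hm q hq
    exact le_antisymm (csInf_le ⟨b₁^2+b₂^2, hlb⟩ hmem) (le_csInf ⟨_, hmem⟩ hlb)
  have hWmem : b₁^2 + b₂^2 ∈ {w : ℝ | ∃ ξ : Measure ℝ, IsProbabilityMeasure ξ ∧
      ξ (Set.Icc 0 (2 * Real.pi))ᶜ = 0 ∧
      w = sInf {v : ℝ | ∃ q : ℝ → ℝ, IsTrigPoly (m - 1) q ∧
        v = ∫ x, (q x + b₁ * Real.sin (m * x) + b₂ * Real.cos (m * x)) ^ 2 ∂ξ}} :=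
    ⟨ξ₀, hprob, hsupp, hSinf.symm⟩
  have hub : ∀ w ∈ {w : ℝ | ∃ ξ : Measure ℝ, IsProbabilityMeasure ξ ∧
      ξ (Set.Icc 0 (2 * Real.pi))ᶜ = 0 ∧
      w = sInf {v : ℝ | ∃ q : ℝ → ℝ, IsTrigPoly (m - 1) q ∧
        v = ∫ x, (q x + b₁ * Real.sin (m * x) + b₂ * Real.cos (m * x)) ^ 2 ∂ξ}},
      w ≤ b₁^2 + b₂^2 := by
    rintro w ⟨ξ, hp, -, rfl⟩
    exact part1 m hm b₁ b₂ ξ hp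
  exact le_antisymm (csSup_le ⟨_, hWmem⟩ hub) (le_csSup ⟨_, hub⟩ hWmem)
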